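/- The five logics CS4, IS4, S4I, GS4, GS4c are pairwise distinct, and the only inclusions among them are CS4 ⊊ IS4 ⊊ GS4 ⊊ GS4c and CS4 ⊊ S4I ⊊ GS4c. In particular: ¬◇⊥ ∉ CS4; (p→q) ∨ (q→p) ∉ IS4 and (p→q) ∨ (q→p) ∉ S4I; □(p∨q) → □p ∨ ◇q ∉ GS4; and (◇p→□q) → □(p→q) ∉ S4I. -/

import Mathlib

universe u

/-- Formulas of the intuitionistic modal language `L`, with a countably infinite
set of propositional variables indexed by `ℕ`. -/
inductive Fml : Type where
  | var : ℕ → Fml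
  | bot : Fml
  | and : Fml → Fml → Fml
  | or : Fml → Fml → Fml
  | imp : Fml → Fml → Fml
  | dia : Fml → Fml
  | box : Fml → Fml
  deriving DecidableEq

/-- A birelational structure: a set of worlds, a set of fallible worlds, an
intuitionistic relation `le` (`≼`), a modal relation `sq` (`⊑`) and a valuation. -/
structure KModel : Type (u + 1) where
  W : Type u
  fallible : Set W
  le : W → W → Prop
  sq : W → W → Prop
  val : ℕ → Set W

namespace KModel

/-- The satisfaction relation. -/
def Sat (M : KModel.{u}) : Fml → M.W → Prop
  | .var p, w => w ∈ M.val p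
  | .bot, w => w ∈ M.fallible
  | .and φ ψ, w => Sat M φ w ∧ Sat M ψ w
  | .or φ ψ, w => Sat M φ w ∨ Sat M ψ w
  | .imp φ ψ, w => ∀ v, M.le w v → Sat M φ v → Sat M ψ v
  | .dia φ, w => ∀ u, M.le w u → ∃ v, M.sq u v ∧ Sat M φ v
  | .box φ, w => ∀ u v, M.le w u → M.sq u v → Sat M φ v

/-- `M` is a bi-intuitionistic model: both relations are preorders, the set of
fallible worlds is closed under both relations, and the valuation is
`≼`-monotone and contains the fallible worlds. -/
def IsBiInt (M : KModel.{u}) : Prop :=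
  (∀ w, M.le w w) ∧ (∀ u v w, M.le u v → M.le v w → M.le u w) ∧
  (∀ w, M.sq w w) ∧ (∀ u v w, M.sq u v → M.sq v w → M.sq u w) ∧
  (∀ w v, w ∈ M.fallible → M.le w v → v ∈ M.fallible) ∧
  (∀ w v, w ∈ M.fallible → M.sq w v → v ∈ M.fallible) ∧
  (∀ p w v, w ∈ M.val p → M.le w v → v ∈ M.val p) ∧
  (∀ p w, w ∈ M.fallible → w ∈ M.val p)

/-- `⊑` is forth–up confluent for `≼`. -/
def ForthUp (M : KModel.{u}) : Prop :=
  ∀ w w' v, M.le w w' → M.sq w v → ∃ v', M.le v v' ∧ M.sq w' v'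

/-- `⊑` is back–up confluent for `≼`. -/
def BackUp (M : KModel.{u}) : Prop :=
  ∀ w v v', M.sq w v → M.le v v' → ∃ w', M.le w w' ∧ M.sq w' v'

/-- `⊑` is forth–down confluent for `≼`. -/
def ForthDown (M : KModel.{u}) : Prop :=
  ∀ w v v', M.le w v → M.sq v v' → ∃ w', M.sq w w' ∧ M.le w' v'

/-- `≼` is upward linear. -/
def UpLinear (M : KModel.{u}) : Prop :=
  ∀ w u v, M.le w u → M.le w v → M.le u v ∨ M.le v u

/-- There are no fallible worlds. -/
def Infallible (M : KModel.{u}) : Prop := M.fallible = ∅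

/-- CS4 frames: back–up confluent bi-intuitionistic frames. -/
def IsCS4 (M : KModel.{u}) : Prop := M.IsBiInt ∧ M.BackUp

/-- IS4 frames: forth–up confluent infallible CS4 frames. -/
def IsIS4 (M : KModel.{u}) : Prop := M.IsCS4 ∧ M.ForthUp ∧ M.Infallible

/-- GS4 frames: upward-linear IS4 frames. -/
def IsGS4 (M : KModel.{u}) : Prop := M.IsIS4 ∧ M.UpLinear

/-- GS4c frames: forth–down confluent GS4 frames. -/
def IsGS4c (M : KModel.{u}) : Prop := M.IsGS4 ∧ M.ForthDown

/-- S4I frames: forth–up and forth–down confluent infallible bi-intuitionistic frames. -/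
def IsS4I (M : KModel.{u}) : Prop :=
  M.IsBiInt ∧ M.ForthUp ∧ M.ForthDown ∧ M.Infallible

end KModel

/-- Hilbert-style derivability from intuitionistic propositional axiom schemes,
the S4 modal axiom schemes, an extra set `Ax` of axioms, modus ponens and
necessitation.  Since all axioms are given as schemes, the resulting set of
formulas is closed under substitution. -/
inductive Deriv (Ax : Fml → Prop) : Fml → Prop where
  | ax {φ} : Ax φ → Deriv Ax φ
  | then₁ (φ ψ : Fml) : Deriv Ax (φ.imp (ψ.imp φ))
  | then₂ (φ ψ χ : Fml) :
      Deriv Ax ((φ.imp (ψ.imp χ)).imp ((φ.imp ψ).imp (φ.imp χ)))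
  | andE₁ (φ ψ : Fml) : Deriv Ax ((φ.and ψ).imp φ)
  | andE₂ (φ ψ : Fml) : Deriv Ax ((φ.and ψ).imp ψ)
  | andI (φ ψ : Fml) : Deriv Ax (φ.imp (ψ.imp (φ.and ψ)))
  | orI₁ (φ ψ : Fml) : Deriv Ax (φ.imp (φ.or ψ))
  | orI₂ (φ ψ : Fml) : Deriv Ax (ψ.imp (φ.or ψ))
  | orE (φ ψ χ : Fml) :
      Deriv Ax ((φ.imp χ).imp ((ψ.imp χ).imp ((φ.or ψ).imp χ)))
  | exfalso (φ : Fml) : Deriv Ax (Fml.bot.imp φ)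
  | kBox (φ ψ : Fml) : Deriv Ax (((φ.imp ψ).box).imp ((φ.box).imp (ψ.box)))
  | kDia (φ ψ : Fml) : Deriv Ax (((φ.imp ψ).box).imp ((φ.dia).imp (ψ.dia)))
  | tBox (φ : Fml) : Deriv Ax ((φ.box).imp φ)
  | tDia (φ : Fml) : Deriv Ax (φ.imp (φ.dia))
  | fourBox (φ : Fml) : Deriv Ax ((φ.box).imp ((φ.box).box))
  | fourDia (φ : Fml) : Deriv Ax (((φ.dia).dia).imp (φ.dia))
  | mp {φ ψ} : Deriv Ax (φ.imp ψ) → Deriv Ax φ → Deriv Ax ψ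
  | nec {φ} : Deriv Ax φ → Deriv Ax (φ.box)

/-- The axiom scheme DP: `◇(p∨q) → ◇p ∨ ◇q`. -/
def AxDP (χ : Fml) : Prop :=
  ∃ φ ψ : Fml, χ = ((φ.or ψ).dia).imp ((φ.dia).or (ψ.dia))

/-- The axiom N: `¬◇⊥`, where `¬φ` abbreviates `φ → ⊥`. -/
def AxN (χ : Fml) : Prop := χ = (Fml.bot.dia).imp Fml.bot

/-- The axiom scheme FS2: `(◇p → □q) → □(p → q)`. -/
def AxFS2 (χ : Fml) : Prop :=
  ∃ φ ψ : Fml, χ = ((φ.dia).imp (ψ.box)).imp ((φ.imp ψ).box)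

/-- The axiom scheme CD: `□(p∨q) → □p ∨ ◇q`. -/
def AxCD (χ : Fml) : Prop :=
  ∃ φ ψ : Fml, χ = ((φ.or ψ).box).imp ((φ.box).or (ψ.dia))

/-- The axiom scheme GD: `(p→q) ∨ (q→p)`. -/
def AxGD (χ : Fml) : Prop :=
  ∃ φ ψ : Fml, χ = (φ.imp ψ).or (ψ.imp φ)

/-- The logic CS4. -/
def CS4 : Fml → Prop := Deriv (fun _ => False)

/-- The logic IS4 = CS4 + DP + N + FS2. -/
def IS4 : Fml → Prop := Deriv (fun χ => AxDP χ ∨ AxN χ ∨ AxFS2 χ)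

/-- The logic S4I = CS4 + DP + N + CD. -/
def S4I : Fml → Prop := Deriv (fun χ => AxDP χ ∨ AxN χ ∨ AxCD χ)

/-- The logic GS4 = IS4 + GD. -/
def GS4 : Fml → Prop := Deriv (fun χ => AxDP χ ∨ AxN χ ∨ AxFS2 χ ∨ AxGD χ)

/-- The logic GS4c = GS4 + CD. -/
def GS4c : Fml → Prop :=
  Deriv (fun χ => AxDP χ ∨ AxN χ ∨ AxFS2 χ ∨ AxGD χ ∨ AxCD χ)

section Soundness

open KModel

variable {M : KModel}

lemma sat_mono (h : M.IsBiInt) :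
    ∀ (φ : Fml) (w v : M.W), M.le w v → M.Sat φ w → M.Sat φ v := by
  obtain ⟨hr, ht, hsr, hst, hfle, hfsq, hval, hfval⟩ := h
  intro φ
  induction φ with
  | var p => intro w v hle hw; exact hval p w v hw hle
  | bot => intro w v hle hw; exact hfle w v hw hle
  | and φ ψ ihφ ihψ =>
      intro w v hle hw; exact ⟨ihφ w v hle hw.1, ihψ w v hle hw.2⟩
  | or φ ψ ihφ ihψ =>
      intro w v hle hw
      rcases hw with h1 | h1
      · exact Or.inl (ihφ w v hle h1)
      · exact Or.inr (ihψ w v hle h1)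
  | imp φ ψ ihφ ihψ => intro w v hle hw u hu hφ; exact hw u (ht w v u hle hu) hφ
  | dia φ ih => intro w v hle hw u hu; exact hw u (ht w v u hle hu)
  | box φ ih => intro w v hle hw u x hu hx; exact hw u x (ht w v u hle hu) hx

lemma fallible_sat (h : M.IsBiInt) :
    ∀ (φ : Fml) (w : M.W), w ∈ M.fallible → M.Sat φ w := by
  obtain ⟨hr, ht, hsr, hst, hfle, hfsq, hval, hfval⟩ := h
  intro φ
  induction φ with
  | var p => intro w hw; exact hfval p w hw
  | bot => intro w hw; exact hw
  | and φ ψ ihφ ihψ => intro w hw; exact ⟨ihφ w hw, ihψ w hw⟩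
  | or φ ψ ihφ ihψ => intro w hw; exact Or.inl (ihφ w hw)
  | imp φ ψ ihφ ihψ => intro w hw v hv _; exact ihψ v (hfle w v hw hv)
  | dia φ ih => intro w hw u hu; exact ⟨u, hsr u, ih u (hfle w u hw hu)⟩
  | box φ ih => intro w hw u v hu hv; exact ih v (hfsq u v (hfle w u hw hu) hv)

/-- The confluence property needed for `4□`. -/
def HFour (M : KModel) : Prop :=
  ∀ w u v₁ u₂ v₂, M.le w u → M.sq u v₁ → M.le v₁ u₂ → M.sq u₂ v₂ →
    ∃ x y, M.le w x ∧ M.sq x y ∧ M.le y v₂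

lemma hFour_of_backUp (h : M.IsBiInt) (hb : M.BackUp) : HFour M := by
  obtain ⟨hr, ht, hsr, hst, -⟩ := h
  intro w u v₁ u₂ v₂ h1 h2 h3 h4
  obtain ⟨u', h5, h6⟩ := hb u v₁ u₂ h2 h3
  exact ⟨u', v₂, ht w u u' h1 h5, hst u' u₂ v₂ h6 h4, hr v₂⟩

lemma hFour_of_forthDown (h : M.IsBiInt) (hb : M.ForthDown) : HFour M := by
  obtain ⟨hr, ht, hsr, hst, -⟩ := h
  intro w u v₁ u₂ v₂ h1 h2 h3 h4
  obtain ⟨w', h5, h6⟩ := hb v₁ u₂ v₂ h3 h4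
  exact ⟨u, w', h1, hst u v₁ w' h2 h5, h6⟩

lemma soundness (h : M.IsBiInt) (h4 : HFour M) {Ax : Fml → Prop}
    (hAx : ∀ φ, Ax φ → ∀ w, M.Sat φ w) :
    ∀ φ, Deriv Ax φ → ∀ w, M.Sat φ w := by
  have hh := h
  obtain ⟨hr, ht, hsr, hst, hfle, hfsq, hval, hfval⟩ := hh
  intro φ hd
  induction hd with
  | ax hφ => exact hAx _ hφ
  | then₁ φ ψ => intro w v _ hφ u hu _; exact sat_mono h φ v u hu hφ
  | then₂ φ ψ χ =>
      intro w a _ h1 b hab h2 c hbc h3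
      exact h1 c (ht a b c hab hbc) h3 c (hr c) (h2 c hbc h3)
  | andE₁ φ ψ => intro w a _ h1; exact h1.1
  | andE₂ φ ψ => intro w a _ h1; exact h1.2
  | andI φ ψ => intro w a _ h1 b hab h2; exact ⟨sat_mono h φ a b hab h1, h2⟩
  | orI₁ φ ψ => intro w a _ h1; exact Or.inl h1
  | orI₂ φ ψ => intro w a _ h1; exact Or.inr h1
  | orE φ ψ χ =>
      intro w a _ h1 b hab h2 c hbc h3
      rcases h3 with h3 | h3
      · exact h1 c (ht a b c hab hbc) h3
      · exact h2 c hbc h3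
  | exfalso φ => intro w a _ hf; exact fallible_sat h φ a hf
  | kBox φ ψ =>
      intro w a _ h1 b hab h2 u v hbu huv
      exact h1 u v (ht a b u hab hbu) huv v (hr v) (h2 u v hbu huv)
  | kDia φ ψ =>
      intro w a _ h1 b hab h2 u hbu
      obtain ⟨v, huv, hφ⟩ := h2 u hbu
      exact ⟨v, huv, h1 u v (ht a b u hab hbu) huv v (hr v) hφ⟩
  | tBox φ => intro w a _ h1; exact h1 a a (hr a) (hsr a)
  | tDia φ => intro w a _ h1 u hau; exact ⟨u, hsr u, sat_mono h φ a u hau h1⟩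
  | fourBox φ =>
      intro w a _ h1 b c hab hbc d e hcd hde
      obtain ⟨x, y, hax, hxy, hye⟩ := h4 a b c d e hab hbc hcd hde
      exact sat_mono h φ y e hye (h1 x y hax hxy)
  | fourDia φ =>
      intro w a _ h1 u hau
      obtain ⟨v1, h2, h3⟩ := h1 u hau
      obtain ⟨v2, h5, h6⟩ := h3 v1 (hr v1)
      exact ⟨v2, hst u v1 v2 h2 h5, h6⟩
  | mp _ _ ih1 ih2 => intro w; exact ih1 w w (hr w) (ih2 w)
  | nec _ ih => intro w u v _ _; exact ih v

lemma valid_DP (h : M.IsBiInt) (hfu : M.ForthUp) (φ ψ : Fml) (w : M.W) :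
    M.Sat (((φ.or ψ).dia).imp ((φ.dia).or (ψ.dia))) w := by
  have hr := h.1
  intro v hv h1
  obtain ⟨v1, hsq, hor⟩ := h1 v (hr v)
  rcases hor with hφ | hφ
  · left
    intro u hu
    obtain ⟨v', h2, h3⟩ := hfu v u v1 hu hsq
    exact ⟨v', h3, sat_mono h φ v1 v' h2 hφ⟩
  · right
    intro u hu
    obtain ⟨v', h2, h3⟩ := hfu v u v1 hu hsq
    exact ⟨v', h3, sat_mono h ψ v1 v' h2 hφ⟩

lemma valid_N (h : M.IsBiInt) (hinf : M.Infallible) (w : M.W) :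
    M.Sat ((Fml.bot.dia).imp Fml.bot) w := by
  intro v hv h1
  obtain ⟨v', -, hf⟩ := h1 v (h.1 v)
  have hf' : v' ∈ M.fallible := hf
  rw [Infallible] at hinf
  rw [hinf] at hf'
  exact hf'.elim

lemma valid_FS2 (h : M.IsBiInt) (hfu : M.ForthUp) (hbu : M.BackUp) (φ ψ : Fml)
    (w : M.W) : M.Sat (((φ.dia).imp (ψ.box)).imp ((φ.imp ψ).box)) w := by
  have hh := h
  obtain ⟨hr, ht, hsr, hst, -⟩ := hh
  intro x hwx h1 u v₁ hxu huv₁ v₂ h12 hφ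
  obtain ⟨u', huu', hu'v₂⟩ := hbu u v₁ v₂ huv₁ h12
  have hdia : M.Sat φ.dia u' := by
    intro u₃ h3
    obtain ⟨v', hle', hsq'⟩ := hfu u' u₃ v₂ h3 hu'v₂
    exact ⟨v', hsq', sat_mono h φ v₂ v' hle' hφ⟩
  exact h1 u' (ht x u u' hxu huu') hdia u' v₂ (hr u') hu'v₂

lemma valid_GD (h : M.IsBiInt) (hul : M.UpLinear) (φ ψ : Fml) (w : M.W) :
    M.Sat ((φ.imp ψ).or (ψ.imp φ)) w := by
  by_cases hc : ∀ v, M.le w v → M.Sat φ v → M.Sat ψ v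
  · exact Or.inl hc
  · right
    push_neg at hc
    obtain ⟨v₀, h0, hφ0, hψ0⟩ := hc
    intro v hv hψ
    rcases hul w v v₀ hv h0 with h1 | h1
    · exact absurd (sat_mono h ψ v v₀ h1 hψ) hψ0
    · exact sat_mono h φ v₀ v h1 hφ0

lemma valid_CD_of (h : M.IsBiInt)
    (hset : ∀ A B : M.W → Prop, (∀ x y, A x → M.le x y → A y) →
      (∀ x y, B x → M.le x y → B y) → ∀ w,
      (∀ u v, M.le w u → M.sq u v → A v ∨ B v) →
      (∀ u v, M.le w u → M.sq u v → A v) ∨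
        (∀ u, M.le w u → ∃ v, M.sq u v ∧ B v))
    (φ ψ : Fml) (w : M.W) :
    M.Sat (((φ.or ψ).box).imp ((φ.box).or (ψ.dia))) w := by
  intro v hv hbox
  exact hset (M.Sat φ) (M.Sat ψ) (fun x y hx hxy => sat_mono h φ x y hxy hx)
    (fun x y hx hxy => sat_mono h ψ x y hxy hx) v hbox

lemma valid_CD (h : M.IsBiInt) (hfu : M.ForthUp) (hfd : M.ForthDown)
    (hul : M.UpLinear) (φ ψ : Fml) (w : M.W) :
    M.Sat (((φ.or ψ).box).imp ((φ.box).or (ψ.dia))) w := by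
  refine valid_CD_of h ?_ φ ψ w
  intro A B mA mB w hbox
  by_cases hA : ∀ u v, M.le w u → M.sq u v → A v
  · exact Or.inl hA
  · push_neg at hA
    obtain ⟨u₁, v₁, h1, h2, h3⟩ := hA
    have hB1 : B v₁ := (hbox u₁ v₁ h1 h2).resolve_left h3
    right
    intro u₂ hu₂
    rcases hul w u₁ u₂ h1 hu₂ with hle | hle
    · obtain ⟨v', hv', hsq'⟩ := hfu u₁ u₂ v₁ hle h2
      exact ⟨v', hsq', mB v₁ v' hB1 hv'⟩
    · obtain ⟨w', hsq', hle'⟩ := hfd u₂ u₁ v₁ hle h2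
      rcases hbox u₂ w' hu₂ hsq' with hA' | hB'
      · exact absurd (mA w' v₁ hA' hle') h3
      · exact ⟨w', hsq', hB'⟩

lemma deriv_mono {Ax Ax' : Fml → Prop} (h : ∀ φ, Ax φ → Ax' φ) :
    ∀ φ, Deriv Ax φ → Deriv Ax' φ := by
  intro φ hd
  induction hd with
  | ax hφ => exact Deriv.ax (h _ hφ)
  | then₁ φ ψ => exact Deriv.then₁ φ ψ
  | then₂ φ ψ χ => exact Deriv.then₂ φ ψ χ
  | andE₁ φ ψ => exact Deriv.andE₁ φ ψ
  | andE₂ φ ψ => exact Deriv.andE₂ φ ψ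
  | andI φ ψ => exact Deriv.andI φ ψ
  | orI₁ φ ψ => exact Deriv.orI₁ φ ψ
  | orI₂ φ ψ => exact Deriv.orI₂ φ ψ
  | orE φ ψ χ => exact Deriv.orE φ ψ χ
  | exfalso φ => exact Deriv.exfalso φ
  | kBox φ ψ => exact Deriv.kBox φ ψ
  | kDia φ ψ => exact Deriv.kDia φ ψ
  | tBox φ => exact Deriv.tBox φ
  | tDia φ => exact Deriv.tDia φ
  | fourBox φ => exact Deriv.fourBox φ
  | fourDia φ => exact Deriv.fourDia φ
  | mp _ _ ih1 ih2 => exact Deriv.mp ih1 ih2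
  | nec _ ih => exact Deriv.nec ih

end Soundness

section Models

open KModel

/-! ### Model 1: refutes N over CS4 frames -/

abbrev M1 : KModel where
  W := Fin 2
  fallible := {x | x = 1}
  le := fun a b => a = b
  sq := fun a b => a = b ∨ b = 1
  val := fun _ => {x | x = 1}

lemma M1_biInt : M1.IsBiInt := by
  refine ⟨fun w => rfl, ?_, fun w => Or.inl rfl, ?_, ?_, ?_, ?_, ?_⟩
  · intro u v w h1 h2; exact h1.trans h2
  · intro u v w h1 h2
    rcases h2 with h2 | h2
    · rcases h1 with h1 | h1
      · exact Or.inl (h1.trans h2)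
      · exact Or.inr (h2 ▸ h1)
    · exact Or.inr h2
  · intro w v hw hle; exact hle ▸ hw
  · intro w v hw hsq
    rcases hsq with h | h
    · exact h ▸ hw
    · exact h
  · intro p w v hw hle; exact hle ▸ hw
  · intro p w hw; exact hw

lemma M1_backUp : M1.BackUp := by
  intro w v v' h1 h2
  exact ⟨w, rfl, h2 ▸ h1⟩

lemma not_CS4_N : ¬ CS4 ((Fml.bot.dia).imp Fml.bot) := by
  intro hd
  have hs := soundness M1_biInt (hFour_of_backUp M1_biInt M1_backUp)
    (fun φ (h : False) => h.elim) _ hd 0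
  have h1 : M1.Sat (Fml.bot.dia) 0 := by
    intro u hu
    exact ⟨1, Or.inr rfl, rfl⟩
  have h2 : (0 : Fin 2) ∈ ({x | x = 1} : Set (Fin 2)) := hs 0 rfl h1
  exact absurd h2 (by decide)

/-! ### Model 2: refutes GD over IS4 frames -/

abbrev M2 : KModel where
  W := Fin 3
  fallible := ∅
  le := fun a b => a = b ∨ a = 0
  sq := fun a b => a = b
  val := fun n => {x | (n = 0 ∧ x = 1) ∨ (n = 1 ∧ x = 2)}

lemma M2_biInt : M2.IsBiInt := by
  refine ⟨fun w => Or.inl rfl, ?_, fun w => rfl, fun u v w h1 h2 => h1.trans h2,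
    ?_, ?_, ?_, ?_⟩
  · intro u v w h1 h2
    rcases h1 with h1 | h1
    · exact h1 ▸ h2
    · exact Or.inr h1
  · intro w v hw; exact hw.elim
  · intro w v hw; exact hw.elim
  · intro p w v hw hle
    rcases hle with hle | hle
    · exact hle ▸ hw
    · rcases hw with ⟨h1, h2⟩ | ⟨h1, h2⟩ <;> simp [hle, h2] at *
  · intro p w hw; exact hw.elim

lemma M2_forthUp : M2.ForthUp := by
  intro w w' v h1 h2
  exact ⟨w', h2 ▸ h1, rfl⟩

lemma M2_backUp : M2.BackUp := by
  intro w v v' h1 h2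
  exact ⟨v', h1 ▸ h2, rfl⟩

lemma M2_infallible : M2.Infallible := rfl

lemma not_IS4_GD :
    ¬ IS4 ((((Fml.var 0).imp (Fml.var 1)).or ((Fml.var 1).imp (Fml.var 0)))) := by
  intro hd
  have hs := soundness M2_biInt (hFour_of_backUp M2_biInt M2_backUp)
    (Ax := fun χ => AxDP χ ∨ AxN χ ∨ AxFS2 χ) ?_ _ hd 0
  · rcases hs with hs | hs
    · have := hs 1 (Or.inr rfl) (Or.inl ⟨rfl, rfl⟩)
      exact absurd (show ((1:ℕ) = 0 ∧ (1:Fin 3) = 1) ∨ ((1:ℕ) = 1 ∧ (1:Fin 3) = 2)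
        from this) (by decide)
    · have := hs 2 (Or.inr rfl) (Or.inr ⟨rfl, rfl⟩)
      exact absurd (show ((0:ℕ) = 0 ∧ (2:Fin 3) = 1) ∨ ((0:ℕ) = 1 ∧ (2:Fin 3) = 2)
        from this) (by decide)
  · rintro χ (⟨φ, ψ, rfl⟩ | rfl | ⟨φ, ψ, rfl⟩)
    · exact valid_DP M2_biInt M2_forthUp φ ψ
    · exact valid_N M2_biInt M2_infallible
    · exact valid_FS2 M2_biInt M2_forthUp M2_backUp φ ψ

/-! ### Model 3: refutes GD over S4I frames -/

abbrev M3 : KModel where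
  W := Fin 3
  fallible := ∅
  le := fun a b => a = b ∨ a = 0
  sq := fun a b => a = b ∨ b ≠ 0
  val := fun n => {x | (n = 0 ∧ x = 1) ∨ (n = 1 ∧ x = 2)}

lemma M3_biInt : M3.IsBiInt := by
  refine ⟨fun w => Or.inl rfl, ?_, fun w => Or.inl rfl, ?_, ?_, ?_, ?_, ?_⟩
  · intro u v w h1 h2
    rcases h1 with h1 | h1
    · exact h1 ▸ h2
    · exact Or.inr h1
  · intro u v w h1 h2
    rcases h2 with h2 | h2
    · exact h2 ▸ h1
    · exact Or.inr h2
  · intro w v hw; exact hw.elim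
  · intro w v hw; exact hw.elim
  · intro p w v hw hle
    rcases hle with hle | hle
    · exact hle ▸ hw
    · rcases hw with ⟨h1, h2⟩ | ⟨h1, h2⟩ <;> simp [hle, h2] at *
  · intro p w hw; exact hw.elim

lemma M3_forthUp : M3.ForthUp := by
  intro w w' v h1 h2
  rcases h2 with h2 | h2
  · exact ⟨w', h2 ▸ h1, Or.inl rfl⟩
  · exact ⟨v, Or.inl rfl, Or.inr h2⟩

lemma M3_forthDown : M3.ForthDown := by
  intro w v v' h1 h2
  rcases h2 with h2 | h2
  · exact ⟨w, Or.inl rfl, h2 ▸ h1⟩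
  · exact ⟨v', Or.inr h2, Or.inl rfl⟩

lemma M3_infallible : M3.Infallible := rfl

lemma M3_CD_set : ∀ A B : M3.W → Prop, (∀ x y, A x → M3.le x y → A y) →
    (∀ x y, B x → M3.le x y → B y) → ∀ w,
    (∀ u v, M3.le w u → M3.sq u v → A v ∨ B v) →
    (∀ u v, M3.le w u → M3.sq u v → A v) ∨
      (∀ u, M3.le w u → ∃ v, M3.sq u v ∧ B v) := by
  intro A B mA mB w hbox
  by_cases hB : B 1 ∨ B 2
  · right
    intro u hu
    rcases hB with hB | hB
    · exact ⟨1, Or.inr (by decide), hB⟩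
    · exact ⟨2, Or.inr (by decide), hB⟩
  · push_neg at hB
    left
    intro u v hu hv
    by_cases hv0 : v = 0
    · subst hv0
      have hu0 : u = 0 := by
        rcases hv with h | h
        · exact h
        · exact absurd rfl h
      subst hu0
      have hw0 : w = 0 := by
        rcases hu with h | h
        · exact h
        · exact h
      subst hw0
      rcases hbox 0 0 (Or.inl rfl) (Or.inl rfl) with hA | hB0
      · exact hA
      · exact absurd (mB 0 1 hB0 (Or.inr rfl)) hB.1
    · have : v = 1 ∨ v = 2 := by
        rcases v with ⟨vv, hlt⟩
        simp [Fin.ext_iff] at hv0 ⊢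
        omega
      rcases hbox u v hu hv with hA | hB'
      · exact hA
      · rcases this with h | h
        · exact absurd (h ▸ hB') hB.1
        · exact absurd (h ▸ hB') hB.2

lemma not_S4I_GD :
    ¬ S4I ((((Fml.var 0).imp (Fml.var 1)).or ((Fml.var 1).imp (Fml.var 0)))) := by
  intro hd
  have hs := soundness M3_biInt (hFour_of_forthDown M3_biInt M3_forthDown)
    (Ax := fun χ => AxDP χ ∨ AxN χ ∨ AxCD χ) ?_ _ hd 0
  · rcases hs with hs | hs
    · have := hs 1 (Or.inr rfl) (Or.inl ⟨rfl, rfl⟩)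
      exact absurd (show ((1:ℕ) = 0 ∧ (1:Fin 3) = 1) ∨ ((1:ℕ) = 1 ∧ (1:Fin 3) = 2)
        from this) (by decide)
    · have := hs 2 (Or.inr rfl) (Or.inr ⟨rfl, rfl⟩)
      exact absurd (show ((0:ℕ) = 0 ∧ (2:Fin 3) = 1) ∨ ((0:ℕ) = 1 ∧ (2:Fin 3) = 2)
        from this) (by decide)
  · rintro χ (⟨φ, ψ, rfl⟩ | rfl | ⟨φ, ψ, rfl⟩)
    · exact valid_DP M3_biInt M3_forthUp φ ψ
    · exact valid_N M3_biInt M3_infallible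
    · exact valid_CD_of M3_biInt M3_CD_set φ ψ

/-! ### Model 4: refutes CD over GS4 frames -/

abbrev M4 : KModel where
  W := Fin 3
  fallible := ∅
  le := fun a b => a = b ∨ (a = 0 ∧ b = 1)
  sq := fun a b => a = b ∨ (a = 1 ∧ b = 2)
  val := fun n => {x | (n = 0 ∧ (x = 0 ∨ x = 1)) ∨ (n = 1 ∧ x = 2)}

lemma M4_biInt : M4.IsBiInt := by
  refine ⟨fun w => Or.inl rfl, ?_, fun w => Or.inl rfl, ?_, ?_, ?_, ?_, ?_⟩
  · intro u v w h1 h2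
    rcases h1 with h1 | ⟨h1, h1'⟩ <;> rcases h2 with h2 | ⟨h2, h2'⟩ <;>
      simp_all
  · intro u v w h1 h2
    rcases h1 with h1 | ⟨h1, h1'⟩ <;> rcases h2 with h2 | ⟨h2, h2'⟩ <;>
      simp_all
  · intro w v hw; exact hw.elim
  · intro w v hw; exact hw.elim
  · intro p w v hw hle
    rcases hle with hle | ⟨h1, h2⟩
    · exact hle ▸ hw
    · rcases hw with ⟨ha, hb⟩ | ⟨ha, hb⟩ <;> subst h1 <;> subst h2 <;>
        simp_all
  · intro p w hw; exact hw.elim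

lemma M4_forthUp : M4.ForthUp := by
  intro w w' v h1 h2
  rcases h1 with h1 | ⟨h1, h1'⟩
  · exact ⟨v, Or.inl rfl, h1 ▸ h2⟩
  · subst h1; subst h1'
    rcases h2 with h2 | ⟨h2, h2'⟩
    · exact ⟨1, Or.inr ⟨h2.symm, rfl⟩, Or.inl rfl⟩
    · exact absurd h2 (by decide)

lemma M4_backUp : M4.BackUp := by
  intro w v v' h1 h2
  rcases h1 with h1 | ⟨h1, h1'⟩
  · subst h1; exact ⟨v', h2, Or.inl rfl⟩
  · subst h1; subst h1'
    rcases h2 with h2 | ⟨h2, h2'⟩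
    · exact ⟨1, Or.inl rfl, Or.inr ⟨rfl, h2.symm⟩⟩
    · exact absurd h2 (by decide)

lemma M4_upLinear : M4.UpLinear := by
  intro w u v h1 h2
  rcases h1 with h1 | ⟨h1, h1'⟩ <;> rcases h2 with h2 | ⟨h2, h2'⟩ <;> simp_all

lemma M4_infallible : M4.Infallible := rfl

lemma not_GS4_CD :
    ¬ GS4 ((((Fml.var 0).or (Fml.var 1)).box).imp
      (((Fml.var 0).box).or ((Fml.var 1).dia))) := by
  intro hd
  have hs := soundness M4_biInt (hFour_of_backUp M4_biInt M4_backUp)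
    (Ax := fun χ => AxDP χ ∨ AxN χ ∨ AxFS2 χ ∨ AxGD χ) ?_ _ hd 0
  · have hbox : M4.Sat (((Fml.var 0).or (Fml.var 1)).box) 0 := by
      intro u v hu hv
      by_cases h2 : v = 2
      · subst h2; exact Or.inr (Or.inr ⟨rfl, rfl⟩)
      · refine Or.inl (Or.inl ⟨rfl, ?_⟩)
        show v = 0 ∨ v = 1; clear hu hv; revert h2; revert v; decide
    rcases hs 0 (Or.inl rfl) hbox with h | h
    · have := h 1 2 (Or.inr ⟨rfl, rfl⟩) (Or.inr ⟨rfl, rfl⟩)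
      exact absurd (show ((0:ℕ) = 0 ∧ ((2:Fin 3) = 0 ∨ (2:Fin 3) = 1)) ∨
        ((0:ℕ) = 1 ∧ (2:Fin 3) = 2) from this) (by decide)
    · obtain ⟨v, hv, hval⟩ := h 0 (Or.inl rfl)
      have hv0 : v = 0 := by
        rcases hv with hv | ⟨hv, hv'⟩
        · exact hv.symm
        · exact absurd hv (by decide)
      subst hv0
      exact absurd (show ((1:ℕ) = 0 ∧ ((0:Fin 3) = 0 ∨ (0:Fin 3) = 1)) ∨
        ((1:ℕ) = 1 ∧ (0:Fin 3) = 2) from hval) (by decide)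
  · rintro χ (⟨φ, ψ, rfl⟩ | rfl | ⟨φ, ψ, rfl⟩ | ⟨φ, ψ, rfl⟩)
    · exact valid_DP M4_biInt M4_forthUp φ ψ
    · exact valid_N M4_biInt M4_infallible
    · exact valid_FS2 M4_biInt M4_forthUp M4_backUp φ ψ
    · exact valid_GD M4_biInt M4_upLinear φ ψ

/-! ### Model 5: refutes FS2 over S4I frames -/

abbrev M5 : KModel where
  W := Fin 3
  fallible := ∅
  le := fun a b => a = b ∨ (a = 1 ∧ b = 2)
  sq := fun a b => a = b ∨ (a = 0 ∧ b = 1)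
  val := fun n => {x | n = 0 ∧ x = 2}

lemma M5_biInt : M5.IsBiInt := by
  refine ⟨fun w => Or.inl rfl, ?_, fun w => Or.inl rfl, ?_, ?_, ?_, ?_, ?_⟩
  · intro u v w h1 h2
    rcases h1 with h1 | ⟨h1, h1'⟩ <;> rcases h2 with h2 | ⟨h2, h2'⟩ <;>
      simp_all
  · intro u v w h1 h2
    rcases h1 with h1 | ⟨h1, h1'⟩ <;> rcases h2 with h2 | ⟨h2, h2'⟩ <;>
      simp_all
  · intro w v hw; exact hw.elim
  · intro w v hw; exact hw.elim
  · intro p w v hw hle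
    rcases hle with hle | ⟨h1, h2⟩
    · exact hle ▸ hw
    · exact absurd (hw.2 ▸ h1) (by decide)
  · intro p w hw; exact hw.elim

lemma M5_forthUp : M5.ForthUp := by
  intro w w' v h1 h2
  rcases h1 with h1 | ⟨h1, h1'⟩
  · exact ⟨v, Or.inl rfl, h1 ▸ h2⟩
  · subst h1; subst h1'
    rcases h2 with h2 | ⟨h2, h2'⟩
    · exact ⟨2, Or.inr ⟨h2.symm, rfl⟩, Or.inl rfl⟩
    · exact absurd h2 (by decide)

lemma M5_forthDown : M5.ForthDown := by
  intro w v v' h1 h2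
  rcases h1 with h1 | ⟨h1, h1'⟩
  · exact ⟨v', h1 ▸ h2, Or.inl rfl⟩
  · subst h1; subst h1'
    rcases h2 with h2 | ⟨h2, h2'⟩
    · exact ⟨1, Or.inl rfl, Or.inr ⟨rfl, h2.symm⟩⟩
    · exact absurd h2 (by decide)

lemma M5_upLinear : M5.UpLinear := by
  intro w u v h1 h2
  rcases h1 with h1 | ⟨h1, h1'⟩ <;> rcases h2 with h2 | ⟨h2, h2'⟩ <;> simp_all

lemma M5_infallible : M5.Infallible := rfl

lemma not_S4I_FS2 :
    ¬ S4I ((((Fml.var 0).dia).imp ((Fml.var 1).box)).imp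
      (((Fml.var 0).imp (Fml.var 1)).box)) := by
  intro hd
  have hs := soundness M5_biInt (hFour_of_forthDown M5_biInt M5_forthDown)
    (Ax := fun χ => AxDP χ ∨ AxN χ ∨ AxCD χ) ?_ _ hd 0
  · have hant : M5.Sat (((Fml.var 0).dia).imp ((Fml.var 1).box)) 0 := by
      intro v hv hdia
      have hv0 : v = 0 := by
        rcases hv with hv | ⟨hv, hv'⟩
        · exact hv.symm
        · exact absurd hv (by decide)
      subst hv0
      obtain ⟨x, hx, hval⟩ := hdia 0 (Or.inl rfl)
      have : x = 0 ∨ x = 1 := by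
        rcases hx with hx | ⟨hx, hx'⟩
        · exact Or.inl hx.symm
        · exact Or.inr hx'
      rcases this with h | h <;> subst h <;>
        exact absurd (show (0:ℕ) = 0 ∧ (_ : Fin 3) = 2 from hval) (by decide)
    have := hs 0 (Or.inl rfl) hant 0 1 (Or.inl rfl) (Or.inr ⟨rfl, rfl⟩)
      2 (Or.inr ⟨rfl, rfl⟩) (by exact ⟨rfl, rfl⟩)
    exact absurd (show (1:ℕ) = 0 ∧ (2:Fin 3) = 2 from this) (by decide)
  · rintro χ (⟨φ, ψ, rfl⟩ | rfl | ⟨φ, ψ, rfl⟩)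
    · exact valid_DP M5_biInt M5_forthUp φ ψ
    · exact valid_N M5_biInt M5_infallible
    · exact valid_CD M5_biInt M5_forthUp M5_forthDown M5_upLinear φ ψ

end Models

/-- **The five logics are pairwise distinct, with exactly the expected inclusions.**
The only inclusions among CS4, IS4, S4I, GS4, GS4c are
`CS4 ⊊ IS4 ⊊ GS4 ⊊ GS4c` and `CS4 ⊊ S4I ⊊ GS4c`.  In particular `¬◇⊥ ∉ CS4`,
`(p→q)∨(q→p) ∉ IS4`, `(p→q)∨(q→p) ∉ S4I`, `□(p∨q)→□p∨◇q ∉ GS4` and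
`(◇p→□q)→□(p→q) ∉ S4I`. -/
theorem logics_pairwise_distinct :
    (∀ φ, CS4 φ → IS4 φ) ∧ (∀ φ, IS4 φ → GS4 φ) ∧ (∀ φ, GS4 φ → GS4c φ) ∧
    (∀ φ, CS4 φ → S4I φ) ∧ (∀ φ, S4I φ → GS4c φ) ∧
    ¬ (∀ φ, IS4 φ → CS4 φ) ∧ ¬ (∀ φ, GS4 φ → IS4 φ) ∧ ¬ (∀ φ, GS4c φ → GS4 φ) ∧
    ¬ (∀ φ, S4I φ → CS4 φ) ∧ ¬ (∀ φ, GS4c φ → S4I φ) ∧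
    ¬ (∀ φ, IS4 φ → S4I φ) ∧ ¬ (∀ φ, S4I φ → IS4 φ) ∧
    ¬ (∀ φ, GS4 φ → S4I φ) ∧ ¬ (∀ φ, S4I φ → GS4 φ) ∧
    ¬ CS4 ((Fml.bot.dia).imp Fml.bot) ∧
    ¬ IS4 ((((Fml.var 0).imp (Fml.var 1)).or ((Fml.var 1).imp (Fml.var 0)))) ∧
    ¬ S4I ((((Fml.var 0).imp (Fml.var 1)).or ((Fml.var 1).imp (Fml.var 0)))) ∧
    ¬ GS4 ((((Fml.var 0).or (Fml.var 1)).box).imp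
      (((Fml.var 0).box).or ((Fml.var 1).dia))) ∧
    ¬ S4I ((((Fml.var 0).dia).imp ((Fml.var 1).box)).imp
      (((Fml.var 0).imp (Fml.var 1)).box)) := by
  have i1 : ∀ φ, CS4 φ → IS4 φ := fun φ h => deriv_mono (fun χ hχ => hχ.elim) φ h
  have i2 : ∀ φ, IS4 φ → GS4 φ := fun φ h => deriv_mono (fun χ hχ => by tauto) φ h
  have i3 : ∀ φ, GS4 φ → GS4c φ := fun φ h => deriv_mono (fun χ hχ => by tauto) φ h
  have i4 : ∀ φ, CS4 φ → S4I φ := fun φ h => deriv_mono (fun χ hχ => hχ.elim) φ h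
  have i5 : ∀ φ, S4I φ → GS4c φ := fun φ h => deriv_mono (fun χ hχ => by tauto) φ h
  have hN_IS4 : IS4 ((Fml.bot.dia).imp Fml.bot) := Deriv.ax (Or.inr (Or.inl rfl))
  have hN_S4I : S4I ((Fml.bot.dia).imp Fml.bot) := Deriv.ax (Or.inr (Or.inl rfl))
  have hGD_GS4 :
      GS4 ((((Fml.var 0).imp (Fml.var 1)).or ((Fml.var 1).imp (Fml.var 0)))) :=
    Deriv.ax (Or.inr (Or.inr (Or.inr ⟨_, _, rfl⟩)))
  have hGD_GS4c :
      GS4c ((((Fml.var 0).imp (Fml.var 1)).or ((Fml.var 1).imp (Fml.var 0)))) :=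
    Deriv.ax (Or.inr (Or.inr (Or.inr (Or.inl ⟨_, _, rfl⟩))))
  have hCD_S4I : S4I ((((Fml.var 0).or (Fml.var 1)).box).imp
      (((Fml.var 0).box).or ((Fml.var 1).dia))) :=
    Deriv.ax (Or.inr (Or.inr ⟨_, _, rfl⟩))
  have hCD_GS4c : GS4c ((((Fml.var 0).or (Fml.var 1)).box).imp
      (((Fml.var 0).box).or ((Fml.var 1).dia))) :=
    Deriv.ax (Or.inr (Or.inr (Or.inr (Or.inr ⟨_, _, rfl⟩))))
  have hFS2_IS4 : IS4 ((((Fml.var 0).dia).imp ((Fml.var 1).box)).imp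
      (((Fml.var 0).imp (Fml.var 1)).box)) :=
    Deriv.ax (Or.inr (Or.inr ⟨_, _, rfl⟩))
  have hFS2_GS4 : GS4 ((((Fml.var 0).dia).imp ((Fml.var 1).box)).imp
      (((Fml.var 0).imp (Fml.var 1)).box)) :=
    Deriv.ax (Or.inr (Or.inr (Or.inl ⟨_, _, rfl⟩)))
  refine ⟨i1, i2, i3, i4, i5,
    fun h => not_CS4_N (h _ hN_IS4),
    fun h => not_IS4_GD (h _ hGD_GS4),
    fun h => not_GS4_CD (h _ hCD_GS4c),
    fun h => not_CS4_N (h _ hN_S4I),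
    fun h => not_S4I_GD (h _ hGD_GS4c),
    fun h => not_S4I_FS2 (h _ hFS2_IS4),
    fun h => not_GS4_CD (i2 _ (h _ hCD_S4I)),
    fun h => not_S4I_FS2 (h _ hFS2_GS4),
    fun h => not_GS4_CD (h _ hCD_S4I),
    not_CS4_N, not_IS4_GD, not_S4I_GD, not_GS4_CD, not_S4I_FS2⟩
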